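/- Let a = (a1, a2) be a unit vector in R^2 with a1 > a2 > 0 and let t satisfy 0 ≤ t ≤ a1 - a2. Then the 1-dimensional volume (length) of the slice {x ∈ [-1/2,1/2]^2 : a1*x1 + a2*x2 = t/2} equals 1/a1. -/

import Mathlib

open MeasureTheory

theorem slice_square_chamber1_volume
    (a1 a2 t : ℝ) (hunit : a1 ^ 2 + a2 ^ 2 = 1) (h12 : a1 > a2) (h2 : a2 > 0)
    (ht0 : 0 ≤ t) (ht1 : t ≤ a1 - a2) :
    μH[1] {x : EuclideanSpace ℝ (Fin 2) |
        (∀ i, |x i| ≤ 1 / 2) ∧ a1 * x 0 + a2 * x 1 = t / 2}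
      = ENNReal.ofReal (1 / a1) := by
  have h1 : a1 > 0 := lt_trans h2 h12
  have h1ne : a1 ≠ 0 := ne_of_gt h1
  set p : EuclideanSpace ℝ (Fin 2) := WithLp.toLp 2 ![(t/2 + a2/2)/a1, -(1/2)] with hp
  set q : EuclideanSpace ℝ (Fin 2) := WithLp.toLp 2 ![(t/2 - a2/2)/a1, 1/2] with hq
  have hset : {x : EuclideanSpace ℝ (Fin 2) |
        (∀ i, |x i| ≤ 1 / 2) ∧ a1 * x 0 + a2 * x 1 = t / 2} = segment ℝ p q := by
    ext x
    rw [segment_eq_image]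
    constructor
    · rintro ⟨hb, hl⟩
      refine ⟨x 1 + 1/2, ⟨by have := abs_le.1 (hb 1); linarith [this.1],
        by have := abs_le.1 (hb 1); linarith [this.2]⟩, ?_⟩
      ext i
      fin_cases i
      · show (1 - (x 1 + 1/2)) * ((t/2 + a2/2)/a1) + (x 1 + 1/2) * ((t/2 - a2/2)/a1) = x 0
        have hx0 : x 0 = (t/2 - a2 * x 1)/a1 := by
          field_simp; linarith
        rw [hx0]; field_simp; ring
      · show (1 - (x 1 + 1/2)) * (-(1/2)) + (x 1 + 1/2) * (1/2) = x 1
        ring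
    · rintro ⟨θ, ⟨hθ0, hθ1⟩, rfl⟩
      have e0 : ((1 - θ) • p + θ • q) 0 = (t/2 - a2 * (θ - 1/2))/a1 := by
        simp only [PiLp.add_apply, PiLp.smul_apply, smul_eq_mul, hp, hq, PiLp.toLp_apply,
          Matrix.cons_val_zero]
        field_simp; ring
      have e1 : ((1 - θ) • p + θ • q) 1 = θ - 1/2 := by
        simp only [PiLp.add_apply, PiLp.smul_apply, smul_eq_mul, hp, hq, PiLp.toLp_apply,
          Matrix.cons_val_one, Matrix.head_cons, Matrix.cons_val_zero]
        ring
      constructor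
      · intro i
        fin_cases i
        · show |((1 - θ) • p + θ • q) 0| ≤ 1/2
          rw [e0, abs_le]
          constructor
          · rw [le_div_iff₀ h1]; nlinarith
          · rw [div_le_iff₀ h1]; nlinarith
        · show |((1 - θ) • p + θ • q) 1| ≤ 1/2
          rw [e1, abs_le]; constructor <;> linarith
      · show a1 * ((1 - θ) • p + θ • q) 0 + a2 * ((1 - θ) • p + θ • q) 1 = t/2
        rw [e0, e1]; field_simp; ring
  rw [hset, hausdorffMeasure_segment, edist_dist, EuclideanSpace.dist_eq]
  congr 1
  have : ∑ i, dist (p i) (q i) ^ 2 = (1/a1)^2 := by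
    rw [Fin.sum_univ_two]
    simp only [hp, hq, Real.dist_eq, PiLp.toLp_apply, Matrix.cons_val_zero, Matrix.cons_val_one,
      Matrix.head_cons]
    rw [div_sub_div_same]
    have : (t/2 + a2/2 - (t/2 - a2/2)) = a2 := by ring
    rw [this, abs_div, abs_of_pos h2, abs_of_pos h1, sq_abs]
    field_simp
    nlinarith
  rw [this, Real.sqrt_sq (by positivity)]
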